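/- Let H be a bialgebra over a commutative ring k. If R ∈ H ⊗ H satisfies the intertwining relation R·Δ(x) = Δ^op(x)·R for all x ∈ H together with the cocycle relation (Δ ⊗ id)(R) = R¹³ · R²³, then R satisfies the quantum Yang–Baxter equation R¹² R¹³ R²³ = R²³ R¹³ R¹² in H ⊗ H ⊗ H. -/

import Mathlib

open scoped TensorProduct

noncomputable section

variable (k H : Type) [CommRing k] [Ring H] [Bialgebra k H]

/-- The embedding `H ⊗ H → H ⊗ H ⊗ H` into the (1,2) tensor factors. -/
def emb12 : H ⊗[k] H →ₗ[k] H ⊗[k] (H ⊗[k] H) :=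
  LinearMap.lTensor H ((TensorProduct.mk k H H).flip 1)

/-- The embedding `H ⊗ H → H ⊗ H ⊗ H` into the (1,3) tensor factors. -/
def emb13 : H ⊗[k] H →ₗ[k] H ⊗[k] (H ⊗[k] H) :=
  LinearMap.lTensor H (TensorProduct.mk k H H 1)

/-- The embedding `H ⊗ H → H ⊗ H ⊗ H` into the (2,3) tensor factors. -/
def emb23 : H ⊗[k] H →ₗ[k] H ⊗[k] (H ⊗[k] H) :=
  TensorProduct.mk k H (H ⊗[k] H) 1

/-- The map `Δ ⊗ id : H ⊗ H → H ⊗ H ⊗ H`. -/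
def comulTensorId : H ⊗[k] H →ₗ[k] H ⊗[k] (H ⊗[k] H) :=
  (TensorProduct.assoc k H H H).toLinearMap ∘ₗ
    LinearMap.rTensor H (Coalgebra.comul (R := k) (A := H))

/-- The opposite comultiplication `Δ^op = τ ∘ Δ`. -/
def comulOp : H →ₗ[k] H ⊗[k] H :=
  (TensorProduct.comm k H H).toLinearMap ∘ₗ Coalgebra.comul (R := k) (A := H)

-- auxiliary
example : True := trivial

lemma emb12_tmul (a b : H) : emb12 k H (a ⊗ₜ b) = a ⊗ₜ (b ⊗ₜ 1) := rfl

lemma emb13_tmul (a b : H) : emb13 k H (a ⊗ₜ b) = a ⊗ₜ ((1:H) ⊗ₜ b) := rfl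

lemma emb23_apply (t : H ⊗[k] H) : emb23 k H t = (1:H) ⊗ₜ t := rfl

def psi (y : H) : H ⊗[k] H →ₗ[k] H ⊗[k] (H ⊗[k] H) :=
  (TensorProduct.assoc k H H H).toLinearMap ∘ₗ (TensorProduct.mk k (H ⊗[k] H) H).flip y

lemma psi_tmul (y a b : H) : psi k H y (a ⊗ₜ b) = a ⊗ₜ (b ⊗ₜ y) := rfl

lemma emb12_mul_psi (y : H) (r t : H ⊗[k] H) :
    emb12 k H r * psi k H y t = psi k H y (r * t) := by
  induction r using TensorProduct.induction_on with
  | zero => simp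
  | tmul a b =>
    induction t using TensorProduct.induction_on with
    | zero => simp
    | tmul c d =>
      simp [emb12_tmul, psi_tmul, Algebra.TensorProduct.tmul_mul_tmul]
    | add s t hs ht => simp [mul_add, hs, ht]
  | add r s hr hs => simp [add_mul, hr, hs]

lemma psi_mul_emb12 (y : H) (r t : H ⊗[k] H) :
    psi k H y t * emb12 k H r = psi k H y (t * r) := by
  induction r using TensorProduct.induction_on with
  | zero => simp
  | tmul a b =>
    induction t using TensorProduct.induction_on with
    | zero => simp
    | tmul c d =>
      simp [emb12_tmul, psi_tmul, Algebra.TensorProduct.tmul_mul_tmul]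
    | add s t hs ht => simp [add_mul, hs, ht]
  | add r s hr hs => simp [mul_add, hr, hs]

def comulOpTensorId : H ⊗[k] H →ₗ[k] H ⊗[k] (H ⊗[k] H) :=
  (TensorProduct.assoc k H H H).toLinearMap ∘ₗ LinearMap.rTensor H (comulOp k H)

lemma step2 (R : H ⊗[k] H)
    (hint : ∀ x : H, R * Coalgebra.comul (R := k) x = comulOp k H x * R) (S : H ⊗[k] H) :
    emb12 k H R * comulTensorId k H S = comulOpTensorId k H S * emb12 k H R := by
  induction S using TensorProduct.induction_on with
  | zero => simp
  | tmul x y =>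
    have h1 : comulTensorId k H (x ⊗ₜ y) = psi k H y (Coalgebra.comul (R := k) x) := by
      simp only [comulTensorId, psi, LinearMap.comp_apply, LinearMap.rTensor_tmul]
      rfl
    have h2 : comulOpTensorId k H (x ⊗ₜ y) = psi k H y (comulOp k H x) := by
      simp only [comulOpTensorId, psi, LinearMap.comp_apply, LinearMap.rTensor_tmul]
      rfl
    rw [h1, h2, emb12_mul_psi, psi_mul_emb12, hint]
  | add s t hs ht => simp [map_add, mul_add, add_mul, hs, ht]

def sigma : H ⊗[k] (H ⊗[k] H) ≃ₐ[k] H ⊗[k] (H ⊗[k] H) :=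
  ((Algebra.TensorProduct.assoc k k k H H H).symm.trans
    (Algebra.TensorProduct.congr (Algebra.TensorProduct.comm k H H) AlgEquiv.refl)).trans
    (Algebra.TensorProduct.assoc k k k H H H)

lemma sigma_tmul (a b c : H) : sigma k H (a ⊗ₜ (b ⊗ₜ c)) = b ⊗ₜ (a ⊗ₜ c) := by
  simp [sigma]

lemma sigma_emb13 (t : H ⊗[k] H) : sigma k H (emb13 k H t) = emb23 k H t := by
  have : (sigma k H).toLinearMap ∘ₗ emb13 k H = emb23 k H := by
    apply TensorProduct.ext'
    intro a b
    simp [emb13_tmul, emb23_apply, sigma_tmul]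
  exact congrFun (congrArg DFunLike.coe this) t

lemma sigma_emb23 (t : H ⊗[k] H) : sigma k H (emb23 k H t) = emb13 k H t := by
  have : (sigma k H).toLinearMap ∘ₗ emb23 k H = emb13 k H := by
    apply TensorProduct.ext'
    intro a b
    simp [emb13_tmul, emb23_apply, sigma_tmul]
  exact congrFun (congrArg DFunLike.coe this) t

lemma sigma_comulTensorId (t : H ⊗[k] H) :
    sigma k H (comulTensorId k H t) = comulOpTensorId k H t := by
  have key : (sigma k H).toLinearMap ∘ₗ (TensorProduct.assoc k H H H).toLinearMap
      = (TensorProduct.assoc k H H H).toLinearMap ∘ₗ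
        LinearMap.rTensor H (TensorProduct.comm k H H).toLinearMap := by
    apply TensorProduct.ext
    apply TensorProduct.ext'
    intro a b
    ext c
    simp [sigma_tmul]
  have : (sigma k H).toLinearMap ∘ₗ comulTensorId k H = comulOpTensorId k H := by
    simp only [comulTensorId, comulOpTensorId, comulOp, ← LinearMap.comp_assoc, key]
    rw [LinearMap.comp_assoc, ← LinearMap.rTensor_comp]
  exact congrFun (congrArg DFunLike.coe this) t

/-- In a bialgebra `H` over a commutative ring `k`, if `R ∈ H ⊗ H`
intertwines `Δ` and `Δ^op`, i.e. `R·Δ(x) = Δ^op(x)·R` for all `x ∈ H`, and satisfies the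
cocycle relation `(Δ ⊗ id)(R) = R¹³ · R²³`, then `R` satisfies the quantum Yang–Baxter
equation `R¹² R¹³ R²³ = R²³ R¹³ R¹²` in `H ⊗ H ⊗ H`. -/
theorem quantum_yang_baxter_of_intertwining_and_cocycle (R : H ⊗[k] H)
    (hint : ∀ x : H, R * Coalgebra.comul (R := k) x = comulOp k H x * R)
    (hcoc : comulTensorId k H R = emb13 k H R * emb23 k H R) :
    emb12 k H R * emb13 k H R * emb23 k H R = emb23 k H R * emb13 k H R * emb12 k H R := by
  rw [mul_assoc, ← hcoc, step2 k H R hint R, ← sigma_comulTensorId, hcoc, map_mul,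
    sigma_emb13, sigma_emb23]
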